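/- Let D be a tight multipartite tournament of order n having a maximum anti-{1,2}-competing set S of size three. Then one of the following holds: (a) C_{1,2}(D) is isomorphic to K_n − E(K₃), the complete graph on n vertices with the three edges among the vertices of S removed; (b) n ≥ 4 and C_{1,2}(D) is isomorphic to K_n − (E(K₃) ∪ E(K_{1,l})) for some positive integer l ≤ n − 3, where K₃ is on the vertex set S and the star K_{1,l} has its center at a vertex v with V(K₃) ∩ V(K_{1,l}) = {v} and its l leaves outside S. -/

import Mathlib

/-- Adjacency in the (1,2)-step competition graph `C_{1,2}(D)` of the (simple) digraph `D`
with arc relation `A`: there is a vertex `w` distinct from `u` and `v` such that either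
(`d_{D-v}(u,w) ≤ 1` and `d_{D-u}(v,w) ≤ 2`) or (`d_{D-u}(v,w) ≤ 1` and `d_{D-v}(u,w) ≤ 2`). -/
def CompAdj {V : Type*} (A : V → V → Prop) (u v : V) : Prop :=
  u ≠ v ∧ ∃ w, w ≠ u ∧ w ≠ v ∧
    ((A u w ∧ (A v w ∨ ∃ z, z ≠ u ∧ A v z ∧ A z w)) ∨
     (A v w ∧ (A u w ∨ ∃ z, z ≠ v ∧ A u z ∧ A z w)))

/-- The (1,2)-step competition graph `C_{1,2}(D)` of the digraph with arc relation `A`. -/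
def compGraph {V : Type*} (A : V → V → Prop) : SimpleGraph V where
  Adj := CompAdj A
  symm := by
    constructor
    rintro u v ⟨hne, w, h1, h2, h3⟩
    exact ⟨hne.symm, w, h2, h1, h3.symm⟩
  loopless := by constructor; rintro u ⟨hne, -⟩; exact hne rfl

/-- Vertices `u` and `v` `(1,2)`-compete in the digraph with arc relation `A`: there is a
vertex `w` distinct from `u` and `v` such that either (`u → w` and there is a directed path
of length 2 from `v` to `w` not traversing `u`) or vice versa. -/
def OneTwoCompete {V : Type*} (A : V → V → Prop) (u v : V) : Prop :=
  ∃ w, w ≠ u ∧ w ≠ v ∧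
    ((A u w ∧ ∃ z, z ≠ u ∧ A v z ∧ A z w) ∨
     (A v w ∧ ∃ z, z ≠ v ∧ A u z ∧ A z w))

/-- `A` is an orientation of the complete multipartite graph whose parts are the fibres of
`p : V → ι`: no arcs within a part, and exactly one arc between any two vertices in
different parts. -/
def IsCompleteMultipartiteOrientation {V ι : Type*} (A : V → V → Prop) (p : V → ι) : Prop :=
  (∀ u v : V, p u = p v → ¬ A u v) ∧
  ∀ u v : V, p u ≠ p v → (A u v ∨ A v u) ∧ ¬ (A u v ∧ A v u)

/-- A multipartite tournament: an orientation of a complete `k`-partite graph with `k ≥ 3`,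
whose partite sets are the (nonempty) fibres of `p : V → ι`. -/
def IsMultipartiteTournament {V ι : Type*} [Fintype ι] (A : V → V → Prop) (p : V → ι) : Prop :=
  Function.Surjective p ∧ 3 ≤ Fintype.card ι ∧ IsCompleteMultipartiteOrientation A p

/-- A multipartite tournament is tight if every partite set is a clique in `C_{1,2}(D)`. -/
def IsTight {V ι : Type*} (A : V → V → Prop) (p : V → ι) : Prop :=
  ∀ u v : V, u ≠ v → p u = p v → CompAdj A u v

/-- A tournament: an orientation of a complete graph. -/
def IsTournament {V : Type*} (A : V → V → Prop) : Prop :=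
  (∀ u, ¬ A u u) ∧ ∀ u v : V, u ≠ v → (A u v ∨ A v u) ∧ ¬ (A u v ∧ A v u)

section Aux

variable {V ι : Type*} {A : V → V → Prop} {p : V → ι}

lemma compAdj_symm {u v : V} (h : CompAdj A u v) : CompAdj A v u := by
  obtain ⟨hne, w, h1, h2, h3⟩ := h
  exact ⟨hne.symm, w, h2, h1, h3.symm⟩

lemma arc_ne (hno : ∀ u v : V, p u = p v → ¬ A u v) {u v : V} (h : A u v) : u ≠ v := by
  rintro rfl; exact hno u u rfl h

lemma arc_pne (hno : ∀ u v : V, p u = p v → ¬ A u v) {u v : V} (h : A u v) : p u ≠ p v :=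
  fun hp => hno u v hp h

lemma adj_common (hno : ∀ u v : V, p u = p v → ¬ A u v) {u v w : V}
    (huv : u ≠ v) (h1 : A u w) (h2 : A v w) : CompAdj A u v :=
  ⟨huv, w, (arc_ne (p := p) hno h1).symm, (arc_ne (p := p) hno h2).symm,
    Or.inl ⟨h1, Or.inl h2⟩⟩

lemma adj_path (hno : ∀ u v : V, p u = p v → ¬ A u v) {u v w z : V}
    (huv : u ≠ v) (h1 : A u w) (h2 : A v z) (h3 : A z w)
    (hz : z ≠ u) (hw : w ≠ v) : CompAdj A u v :=
  ⟨huv, w, (arc_ne (p := p) hno h1).symm, hw, Or.inl ⟨h1, Or.inr ⟨z, hz, h2, h3⟩⟩⟩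

lemma type_lemma (hno : ∀ u v : V, p u = p v → ¬ A u v)
    (hone : ∀ u v : V, p u ≠ p v → A u v ∨ A v u)
    {a b c x : V} (hab : A a b) (hbc : A b c) (hca : A c a)
    (nab : ¬ CompAdj A a b) (nbc : ¬ CompAdj A b c) (nca : ¬ CompAdj A c a)
    (hxa : x ≠ a) (hxb : x ≠ b) (hxc : x ≠ c)
    (hna : ¬ CompAdj A x a) : A x a ∧ A c x ∧ p x = p b := by
  have pab := arc_pne hno hab
  have pbc := arc_pne hno hbc
  have pca := arc_pne hno hca
  have nxb : ¬ A x b := fun h => hna (adj_common hno hxa h hab)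
  have nxc : ¬ A x c := fun h =>
    hna (adj_path hno hxa h hab hbc hxb.symm (arc_ne hno hca))
  have hax : A x a := by
    by_cases hpa : p x = p a
    · have h1 : A b x := (hone x b (by rw [hpa]; exact pab)).resolve_left nxb
      have h2 : A c x := (hone x c (by rw [hpa]; exact fun h => pca h.symm)).resolve_left nxc
      exact absurd (adj_common hno (arc_ne hno hbc) h1 h2) nbc
    · rcases hone x a hpa with h | h
      · exact h
      · by_cases hpb : p x = p b
        · have h2 : A c x := (hone x c (by rw [hpb]; exact pbc)).resolve_left nxc
          exact absurd (compAdj_symm (adj_common hno (arc_ne hno hca).symm h h2)) nca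
        · have h1 : A b x := (hone x b hpb).resolve_left nxb
          exact absurd (adj_common hno (arc_ne hno hab) h h1) nab
  have nbx : ¬ A b x := fun h =>
    nbc (compAdj_symm (adj_path hno (arc_ne hno hbc).symm hca h hax hxc (arc_ne hno hab)))
  have hpb : p x = p b := by
    by_contra hpb
    rcases hone x b hpb with h | h
    exacts [nxb h, nbx h]
  have hcx : A c x := (hone x c (by rw [hpb]; exact pbc)).resolve_left nxc
  exact ⟨hax, hcx, hpb⟩

lemma centers_lemma (hno : ∀ u v : V, p u = p v → ¬ A u v)
    (hone : ∀ u v : V, p u ≠ p v → A u v ∨ A v u)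
    {a b c x y : V} (hab : A a b) (hbc : A b c) (hca : A c a)
    (nab : ¬ CompAdj A a b) (nbc : ¬ CompAdj A b c) (nca : ¬ CompAdj A c a)
    (hxa : x ≠ a) (hxb : x ≠ b) (hxc : x ≠ c)
    (hya : y ≠ a) (hyb : y ≠ b) (hyc : y ≠ c)
    (hnx : ¬ CompAdj A x a) (hny : ¬ CompAdj A y b) : False := by
  obtain ⟨hxa', hcx, hpxb⟩ :=
    type_lemma hno hone hab hbc hca nab nbc nca hxa hxb hxc hnx
  obtain ⟨hyb', hay, hpyc⟩ :=
    type_lemma hno hone hbc hca hab nbc nca nab hyb hyc hya hny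
  have hpxy : p x ≠ p y := by
    rw [hpxb, hpyc]; exact arc_pne hno hbc
  rcases hone x y hpxy with h | h
  · exact hnx (compAdj_symm (adj_path hno hxa.symm hab h hyb' hya hxb.symm))
  · exact hny (adj_path hno hyb h hbc hcx hyc.symm hxb)

lemma out_lemma (hno : ∀ u v : V, p u = p v → ¬ A u v)
    (hone : ∀ u v : V, p u ≠ p v → A u v ∨ A v u)
    {a b c x : V} (hab : A a b) (hbc : A b c) (hca : A c a)
    (nab : ¬ CompAdj A a b) (nbc : ¬ CompAdj A b c) (nca : ¬ CompAdj A c a) :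
    A x a ∨ A x b ∨ A x c := by
  have pab := arc_pne hno hab
  have pbc := arc_pne hno hbc
  have pca := arc_pne hno hca
  by_contra h
  push_neg at h
  obtain ⟨n1, n2, n3⟩ := h
  by_cases hpa : p x = p a
  · have h1 : A b x := (hone x b (by rw [hpa]; exact pab)).resolve_left n2
    have h2 : A c x := (hone x c (by rw [hpa]; exact fun hh => pca hh.symm)).resolve_left n3
    exact nbc (adj_common hno (arc_ne hno hbc) h1 h2)
  · have h1 : A a x := (hone x a hpa).resolve_left n1
    by_cases hpb : p x = p b
    · have h2 : A c x := (hone x c (by rw [hpb]; exact pbc)).resolve_left n3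
      exact nca (compAdj_symm (adj_common hno (arc_ne hno hca).symm h1 h2))
    · have h2 : A b x := (hone x b hpb).resolve_left n2
      exact nab (adj_common hno (arc_ne hno hab) h1 h2)

lemma outside_adj (hno : ∀ u v : V, p u = p v → ¬ A u v)
    (hone : ∀ u v : V, p u ≠ p v → A u v ∨ A v u)
    {a b c x y : V} (hab : A a b) (hbc : A b c) (hca : A c a)
    (nab : ¬ CompAdj A a b) (nbc : ¬ CompAdj A b c) (nca : ¬ CompAdj A c a)
    (hxa : x ≠ a) (hxb : x ≠ b) (hxc : x ≠ c)
    (hya : y ≠ a) (hyb : y ≠ b) (hyc : y ≠ c)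
    (hxy : x ≠ y) : CompAdj A x y := by
  have key : ∀ s t : V, A x s → A y t → A t s → t ≠ x → s ≠ y → CompAdj A x y :=
    fun s t h1 h2 h3 h4 h5 => adj_path hno hxy h1 h2 h3 h4 h5
  have key2 : ∀ s t : V, A x s → A y t → A s t → s ≠ y → t ≠ x → CompAdj A x y :=
    fun s t h1 h2 h3 h4 h5 =>
      compAdj_symm (adj_path hno hxy.symm h2 h1 h3 h4 h5)
  rcases out_lemma (x := x) hno hone hab hbc hca nab nbc nca with h1 | h1 | h1 <;>
    rcases out_lemma (x := y) hno hone hab hbc hca nab nbc nca with h2 | h2 | h2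
  · exact adj_common hno hxy h1 h2
  · exact key2 a b h1 h2 hab hya.symm hxb.symm
  · exact key a c h1 h2 hca hxc.symm hya.symm
  · exact key b a h1 h2 hab hxa.symm hyb.symm
  · exact adj_common hno hxy h1 h2
  · exact key2 b c h1 h2 hbc hyb.symm hxc.symm
  · exact key2 c a h1 h2 hca hyc.symm hxa.symm
  · exact key c b h1 h2 hbc hxb.symm hyc.symm
  · exact adj_common hno hxy h1 h2

lemma main_lemma {V ι : Type*} [Fintype V] (A : V → V → Prop) (p : V → ι)
    (hno : ∀ u v : V, p u = p v → ¬ A u v)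
    (hone : ∀ u v : V, p u ≠ p v → A u v ∨ A v u)
    (n : ℕ) (hn : Fintype.card V = n)
    (S : Finset V) (hS3 : S.card = 3) (a b c : V)
    (haS : a ∈ S) (hbS : b ∈ S) (hcS : c ∈ S)
    (hSsub : ∀ s ∈ S, s = a ∨ s = b ∨ s = c)
    (hab : A a b) (hbc : A b c) (hca : A c a)
    (nab : ¬ CompAdj A a b) (nbc : ¬ CompAdj A b c) (nca : ¬ CompAdj A c a) :
    (∀ x y : V, x ≠ y → ((compGraph A).Adj x y ↔ ¬ (x ∈ S ∧ y ∈ S))) ∨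
    (4 ≤ n ∧ ∃ v ∈ S, ∃ L : Finset V, 1 ≤ L.card ∧ L.card ≤ n - 3 ∧
      (∀ x ∈ L, x ∉ S) ∧
      ∀ x y : V, x ≠ y →
        ((compGraph A).Adj x y ↔
          ¬ ((x ∈ S ∧ y ∈ S) ∨ (x = v ∧ y ∈ L) ∨ (y = v ∧ x ∈ L)))) := by
  classical
  have hne : ∀ {x : V}, x ∉ S → x ≠ a ∧ x ≠ b ∧ x ≠ c := fun {x} hx =>
    ⟨fun h => hx (h ▸ haS), fun h => hx (h ▸ hbS), fun h => hx (h ▸ hcS)⟩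
  have hstab : ∀ u ∈ S, ∀ v ∈ S, u ≠ v → ¬ CompAdj A u v := by
    intro u hu v hv huv
    rcases hSsub u hu with rfl | rfl | rfl <;> rcases hSsub v hv with rfl | rfl | rfl <;>
      first
        | exact absurd rfl huv
        | exact nab
        | exact nbc
        | exact nca
        | exact fun h => nab (compAdj_symm h)
        | exact fun h => nbc (compAdj_symm h)
        | exact fun h => nca (compAdj_symm h)
  have F1 : ∀ x y : V, x ∉ S → y ∉ S → x ≠ y → CompAdj A x y := by
    intro x y hx hy hxy
    obtain ⟨hx1, hx2, hx3⟩ := hne hx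
    obtain ⟨hy1, hy2, hy3⟩ := hne hy
    exact outside_adj hno hone hab hbc hca nab nbc nca hx1 hx2 hx3 hy1 hy2 hy3 hxy
  have CC : ∀ u w x y : V, u ∈ S → w ∈ S → u ≠ w → x ∉ S → y ∉ S →
      ¬ CompAdj A x u → ¬ CompAdj A y w → False := by
    intro u w x y hu hw huw hx hy h1 h2
    obtain ⟨hx1, hx2, hx3⟩ := hne hx
    obtain ⟨hy1, hy2, hy3⟩ := hne hy
    rcases hSsub u hu with rfl | rfl | rfl <;> rcases hSsub w hw with rfl | rfl | rfl
    · exact huw rfl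
    · exact centers_lemma hno hone hab hbc hca nab nbc nca hx1 hx2 hx3 hy1 hy2 hy3 h1 h2
    · exact centers_lemma hno hone hca hab hbc nca nab nbc hy3 hy1 hy2 hx3 hx1 hx2 h2 h1
    · exact centers_lemma hno hone hab hbc hca nab nbc nca hy1 hy2 hy3 hx1 hx2 hx3 h2 h1
    · exact huw rfl
    · exact centers_lemma hno hone hbc hca hab nbc nca nab hx2 hx3 hx1 hy2 hy3 hy1 h1 h2
    · exact centers_lemma hno hone hca hab hbc nca nab nbc hx3 hx1 hx2 hy3 hy1 hy2 h1 h2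
    · exact centers_lemma hno hone hbc hca hab nbc nca nab hy2 hy3 hy1 hx2 hx3 hx1 h2 h1
    · exact huw rfl
  by_cases hH : ∃ x, x ∉ S ∧ ∃ s ∈ S, ¬ CompAdj A x s
  · right
    obtain ⟨x0, hx0, v, hvS, hnv⟩ := hH
    refine ⟨?_, v, hvS, Finset.univ.filter (fun y => y ∉ S ∧ ¬ CompAdj A y v),
      ?_, ?_, ?_, ?_⟩
    · have h4 : (insert x0 S).card = 4 := by
        rw [Finset.card_insert_of_notMem hx0, hS3]
      calc 4 = (insert x0 S).card := h4.symm
        _ ≤ Fintype.card V := Finset.card_le_univ _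
        _ = n := hn
    · refine Finset.card_pos.mpr ⟨x0, ?_⟩
      simp only [Finset.mem_filter, Finset.mem_univ, true_and]
      exact ⟨hx0, hnv⟩
    · have hsub : Finset.univ.filter (fun y => y ∉ S ∧ ¬ CompAdj A y v) ⊆ Sᶜ := by
        intro y hy
        simp only [Finset.mem_filter, Finset.mem_univ, true_and] at hy
        exact Finset.mem_compl.mpr hy.1
      calc (Finset.univ.filter (fun y => y ∉ S ∧ ¬ CompAdj A y v)).card
          ≤ Sᶜ.card := Finset.card_le_card hsub
        _ = Fintype.card V - S.card := Finset.card_compl S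
        _ = n - 3 := by rw [hn, hS3]
    · intro x hx
      simp only [Finset.mem_filter, Finset.mem_univ, true_and] at hx
      exact hx.1
    · intro x y hxy
      constructor
      · rintro hadj (⟨hxS, hyS⟩ | ⟨rfl, hyL⟩ | ⟨rfl, hxL⟩)
        · exact hstab x hxS y hyS hxy hadj
        · simp only [Finset.mem_filter, Finset.mem_univ, true_and] at hyL
          exact hyL.2 (compAdj_symm hadj)
        · simp only [Finset.mem_filter, Finset.mem_univ, true_and] at hxL
          exact hxL.2 hadj
      · intro hnot
        by_contra hna
        have hna' : ¬ CompAdj A x y := hna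
        by_cases hxS : x ∈ S <;> by_cases hyS : y ∈ S
        · exact hnot (Or.inl ⟨hxS, hyS⟩)
        · have h2 : ¬ CompAdj A y x := fun h => hna' (compAdj_symm h)
          by_cases hxv : x = v
          · refine hnot (Or.inr (Or.inl ⟨hxv, ?_⟩))
            simp only [Finset.mem_filter, Finset.mem_univ, true_and]
            exact ⟨hyS, hxv ▸ h2⟩
          · exact CC x v y x0 hxS hvS hxv hyS hx0 h2 hnv
        · by_cases hyv : y = v
          · refine hnot (Or.inr (Or.inr ⟨hyv, ?_⟩))
            simp only [Finset.mem_filter, Finset.mem_univ, true_and]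
            exact ⟨hxS, hyv ▸ hna'⟩
          · exact CC y v x x0 hyS hvS hyv hxS hx0 hna' hnv
        · exact hna' (F1 x y hxS hyS hxy)
  · left
    push_neg at hH
    intro x y hxy
    constructor
    · rintro hadj ⟨hxS, hyS⟩
      exact hstab x hxS y hyS hxy hadj
    · intro hnot
      by_cases hxS : x ∈ S <;> by_cases hyS : y ∈ S
      · exact absurd ⟨hxS, hyS⟩ hnot
      · exact compAdj_symm (hH y hyS x hxS)
      · exact hH x hxS y hyS
      · exact F1 x y hxS hyS hxy

end Aux

/-- Let `D` be a tight multipartite tournament of order `n` having a maximum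
anti-`{1,2}`-competing set `S` of size three. Then either (a) `C_{1,2}(D) ≅ K_n − E(K₃)`
where `K₃` is on `S`, or (b) `n ≥ 4` and `C_{1,2}(D) ≅ K_n − (E(K₃) ∪ E(K_{1,l}))` for
some `1 ≤ l ≤ n − 3`, where `K₃` is on `S` and the star `K_{1,l}` has its center at a
vertex `v ∈ S` and its `l` leaves outside `S`. -/
theorem stmt17 {V ι : Type*} [Fintype V] [Fintype ι]
    (A : V → V → Prop) (p : V → ι) (hD : IsMultipartiteTournament A p)
    (htight : IsTight A p) (n : ℕ) (hn : Fintype.card V = n)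
    (S : Finset V) (hS3 : S.card = 3)
    (hstable : ∀ x ∈ S, ∀ y ∈ S, x ≠ y → ¬ (compGraph A).Adj x y)
    (hmax : ∀ T : Finset V, (∀ x ∈ T, ∀ y ∈ T, x ≠ y → ¬ (compGraph A).Adj x y) →
      T.card ≤ 3) :
    (∀ x y : V, x ≠ y → ((compGraph A).Adj x y ↔ ¬ (x ∈ S ∧ y ∈ S))) ∨
    (4 ≤ n ∧ ∃ v ∈ S, ∃ L : Finset V, 1 ≤ L.card ∧ L.card ≤ n - 3 ∧
      (∀ x ∈ L, x ∉ S) ∧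
      ∀ x y : V, x ≠ y →
        ((compGraph A).Adj x y ↔
          ¬ ((x ∈ S ∧ y ∈ S) ∨ (x = v ∧ y ∈ L) ∨ (y = v ∧ x ∈ L)))) := by
  classical
  obtain ⟨-, -, hno, honeFull⟩ := hD
  have hone : ∀ u v : V, p u ≠ p v → A u v ∨ A v u := fun u v h => (honeFull u v h).1
  obtain ⟨a, b, c, hab', hac', hbc', hSeq⟩ := Finset.card_eq_three.mp hS3
  have haS : a ∈ S := by rw [hSeq]; simp
  have hbS : b ∈ S := by rw [hSeq]; simp
  have hcS : c ∈ S := by rw [hSeq]; simp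
  have hSsub : ∀ s ∈ S, s = a ∨ s = b ∨ s = c := by
    intro s hs; rw [hSeq] at hs; simpa using hs
  have hpne : ∀ u ∈ S, ∀ v ∈ S, u ≠ v → p u ≠ p v := by
    intro u hu v hv huv hp
    exact hstable u hu v hv huv (htight u v huv hp)
  have nab : ¬ CompAdj A a b := hstable a haS b hbS hab'
  have nac : ¬ CompAdj A a c := hstable a haS c hcS hac'
  have nbc : ¬ CompAdj A b c := hstable b hbS c hcS hbc'
  have nba : ¬ CompAdj A b a := fun h => nab (compAdj_symm h)
  have nca : ¬ CompAdj A c a := fun h => nac (compAdj_symm h)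
  have ncb : ¬ CompAdj A c b := fun h => nbc (compAdj_symm h)
  rcases hone a b (hpne a haS b hbS hab') with h1 | h1 <;>
    rcases hone b c (hpne b hbS c hcS hbc') with h2 | h2 <;>
      rcases hone c a (hpne c hcS a haS fun h => hac' h.symm) with h3 | h3
  · exact main_lemma A p hno hone n hn S hS3 a b c haS hbS hcS hSsub h1 h2 h3 nab nbc nca
  · exact absurd (adj_common hno hab' h3 h2) nab
  · exact absurd (adj_common hno hac' h1 h2) nac
  · exact absurd (adj_common hno hac' h1 h2) nac
  · exact absurd (adj_common hno hbc' h1 h3) nbc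
  · exact absurd (adj_common hno hab' h3 h2) nab
  · exact absurd (adj_common hno hbc' h1 h3) nbc
  · exact main_lemma A p hno hone n hn S hS3 a c b haS hcS hbS
      (fun s hs => (hSsub s hs).imp id Or.symm) h3 h2 h1 nac ncb nba
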